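/- arXiv:2401.01840 — 2 statements merged into one kernel-verified Lean document; each statement's English description precedes it below -/
import Mathlib

section
/- Let m > 2, σ > 0, and θ_m = (1/(2σ))^{1/(m-2)}. The convex hull (convex envelope) of h_m on [0,∞) is given by h_m^{**}(ρ) = 0 for ρ ∈ [0, θ_m] and h_m^{**}(ρ) = h_m(ρ) for ρ ≥ θ_m. -/
open Real Set

theorem stmt_2 (m σ : ℝ) (hm : 2 < m) (hσ : 0 < σ)
    (θ : ℝ) (hθ : θ = (1 / (2 * σ)) ^ (1 / (m - 2)))
    (h : ℝ → ℝ)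
    (hdef : ∀ ρ : ℝ, h ρ = ρ ^ m / (m - 1) - (1 / (2 * σ)) * ρ ^ 2
        + ((m - 2) / (m - 1)) * θ ^ (m - 1) * ρ)
    (hstar : ℝ → ℝ)
    (hstardef : ∀ ρ : ℝ, hstar ρ = if ρ ≤ θ then 0 else h ρ) :
    ConvexOn ℝ (Ici (0 : ℝ)) hstar ∧
    (∀ ρ ∈ Ici (0 : ℝ), hstar ρ ≤ h ρ) ∧
    (∀ g : ℝ → ℝ, ConvexOn ℝ (Ici (0 : ℝ)) g → (∀ ρ ∈ Ici (0 : ℝ), g ρ ≤ h ρ) →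
      ∀ ρ ∈ Ici (0 : ℝ), g ρ ≤ hstar ρ) := by
  have hm1 : (1:ℝ) < m - 1 := by linarith
  have hm1' : (m:ℝ) - 1 ≠ 0 := by linarith
  have hm2 : (0:ℝ) < m - 2 := by linarith
  have hσ2 : (0:ℝ) < 1 / (2 * σ) := by positivity
  have θpos : 0 < θ := hθ ▸ Real.rpow_pos_of_pos hσ2 _
  have hθ2 : θ ^ (m - 2) = 1 / (2 * σ) := by
    rw [hθ, ← Real.rpow_mul hσ2.le, one_div_mul_cancel hm2.ne', Real.rpow_one]
  have hθ1 : θ ^ (m - 1) = θ ^ (m - 2) * θ := by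
    rw [← Real.rpow_add_one θpos.ne' (m - 2)]
    congr 1
    ring
  have hθm : θ ^ m = θ ^ (m - 1) * θ := by
    rw [← Real.rpow_add_one θpos.ne' (m - 1)]
    congr 1
    ring
  have hhθ : h θ = 0 := by
    rw [hdef, hθm, hθ1, hθ2, sq]
    field_simp
    ring
  have hh0 : h 0 = 0 := by
    rw [hdef, Real.zero_rpow (by positivity : m ≠ 0)]
    ring
  -- nonnegativity of h on Ici 0 via Young's inequality
  have hconj : (m - 1).HolderConjugate ((m - 1) / (m - 2)) := by
    rw [Real.holderConjugate_iff_eq_conjExponent hm1]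
    congr 1
    ring
  have hnn : ∀ ρ : ℝ, 0 ≤ ρ → 0 ≤ h ρ := by
    intro ρ hρ
    rcases eq_or_lt_of_le hρ with rfl | hρ'
    · rw [hh0]
    · have Y := Real.young_inequality_of_nonneg hρ (Real.rpow_nonneg θpos.le (m - 2)) hconj
      have hb : (θ ^ (m - 2)) ^ ((m - 1) / (m - 2)) = θ ^ (m - 1) := by
        rw [← Real.rpow_mul θpos.le]
        congr 1
        field_simp
      rw [hb, div_div_eq_mul_div] at Y
      have hE : ρ ^ m = ρ ^ (m - 1) * ρ := by
        rw [← Real.rpow_add_one hρ'.ne' (m - 1)]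
        congr 1
        ring
      have Y3 : (m - 1) * (ρ * θ ^ (m - 2)) ≤ ρ ^ (m - 1) + θ ^ (m - 1) * (m - 2) := by
        have h5 := mul_le_mul_of_nonneg_left Y (by linarith : (0:ℝ) ≤ m - 1)
        calc (m - 1) * (ρ * θ ^ (m - 2)) ≤ (m - 1) * (ρ ^ (m - 1) / (m - 1) + θ ^ (m - 1) * (m - 2) / (m - 1)) := h5
          _ = ρ ^ (m - 1) + θ ^ (m - 1) * (m - 2) := by field_simp
      have key : 0 ≤ ρ * (ρ ^ (m - 1) + θ ^ (m - 1) * (m - 2) - (m - 1) * (ρ * θ ^ (m - 2))) :=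
        mul_nonneg hρ (by linarith)
      rw [hdef, hE, ← hθ2, sq]
      have expand : ρ ^ (m - 1) * ρ / (m - 1) - θ ^ (m - 2) * (ρ * ρ) + (m - 2) / (m - 1) * θ ^ (m - 1) * ρ
          = (ρ * (ρ ^ (m - 1) + θ ^ (m - 1) * (m - 2) - (m - 1) * (ρ * θ ^ (m - 2)))) / (m - 1) := by
        field_simp
        ring
      rw [expand]
      exact div_nonneg key (by linarith)
  -- the derivative of h
  set h' : ℝ → ℝ := fun x => m * x ^ (m - 1) / (m - 1) - (1 / σ) * x
      + ((m - 2) / (m - 1)) * θ ^ (m - 1) with h'def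
  have hF : ∀ x : ℝ, 0 < x → HasDerivAt h (h' x) x := by
    intro x hx
    have h1 : HasDerivAt (fun y : ℝ => y ^ m) (m * x ^ (m - 1)) x :=
      Real.hasDerivAt_rpow_const (Or.inl hx.ne')
    have h2 : HasDerivAt (fun y : ℝ => (1 / (2 * σ)) * y ^ 2) ((1 / (2 * σ)) * (2 * x)) x := by
      have := (hasDerivAt_pow 2 x).const_mul (1 / (2 * σ))
      simpa using this
    have h3 : HasDerivAt (fun y : ℝ => ((m - 2) / (m - 1)) * θ ^ (m - 1) * y)
        (((m - 2) / (m - 1)) * θ ^ (m - 1) * 1) x :=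
      (hasDerivAt_id x).const_mul _
    have h4 := (h1.div_const (m - 1)).sub h2 |>.add h3
    have hfun : h = fun ρ => ρ ^ m / (m - 1) - (1 / (2 * σ)) * ρ ^ 2
        + ((m - 2) / (m - 1)) * θ ^ (m - 1) * ρ := funext hdef
    rw [hfun]
    convert h4 using 1
    · rfl
    · rfl
    · rfl
    rw [h'def]
    field_simp
  -- the second derivative of h
  have hF2 : ∀ x : ℝ, 0 < x → HasDerivAt h' (m * x ^ (m - 2) - 1 / σ) x := by
    intro x hx
    have h1 : HasDerivAt (fun y : ℝ => m * y ^ (m - 1) / (m - 1))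
        (m * ((m - 1) * x ^ (m - 1 - 1)) / (m - 1)) x :=
      ((Real.hasDerivAt_rpow_const (Or.inl hx.ne')).const_mul m).div_const (m - 1)
    have h2 : HasDerivAt (fun y : ℝ => (1 / σ) * y) ((1 / σ) * 1) x :=
      (hasDerivAt_id x).const_mul _
    have h4 := (h1.sub h2).add_const (((m - 2) / (m - 1)) * θ ^ (m - 1))
    rw [h'def]
    convert h4 using 1
    · rfl
    · rfl
    · rfl
    rw [show m - 1 - 1 = m - 2 by ring]
    field_simp
  -- h' is monotone and nonnegative on [θ, ∞)
  have mono' : MonotoneOn h' (Ici θ) := by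
    apply monotoneOn_of_deriv_nonneg (convex_Ici θ)
    · intro x hx
      exact (hF2 x (θpos.trans_le hx)).continuousAt.continuousWithinAt
    · intro x hx
      rw [interior_Ici] at hx
      exact (hF2 x (θpos.trans hx)).differentiableAt.differentiableWithinAt
    · intro x hx
      rw [interior_Ici] at hx
      rw [(hF2 x (θpos.trans hx)).deriv]
      have hx2 : θ ^ (m - 2) ≤ x ^ (m - 2) :=
        Real.rpow_le_rpow θpos.le (le_of_lt hx) hm2.le
      rw [hθ2] at hx2
      have : 0 < σ := hσ
      rw [sub_nonneg]
      calc 1 / σ = 2 * (1 / (2 * σ)) := by field_simp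
        _ ≤ m * (1 / (2 * σ)) := by nlinarith
        _ ≤ m * x ^ (m - 2) := by nlinarith
  have h'θ : h' θ = 0 := by
    rw [h'def]
    simp only
    rw [hθ1, hθ2]
    field_simp
    ring
  have h'nn : ∀ y ∈ Ici θ, 0 ≤ h' y := fun y hy => h'θ ▸ mono' self_mem_Ici hy hy
  -- the derivative of hstar
  set D : ℝ → ℝ := fun x => if x ≤ θ then 0 else h' x with Ddef
  have hD : ∀ x : ℝ, 0 < x → HasDerivAt hstar (D x) x := by
    intro x hx
    rcases lt_trichotomy x θ with hlt | rfl | hgt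
    · -- locally constant 0
      have : hstar =ᶠ[nhds x] fun _ => (0:ℝ) := by
        filter_upwards [Iio_mem_nhds hlt] with y hy
        rw [hstardef, if_pos (le_of_lt hy)]
      have h0 : HasDerivAt (fun _ : ℝ => (0:ℝ)) 0 x := hasDerivAt_const x 0
      rw [Ddef]
      simp only [if_pos hlt.le]
      exact h0.congr_of_eventuallyEq this
    · -- junction point
      rw [Ddef]
      simp only [le_refl, if_pos]
      have hIic : HasDerivWithinAt hstar 0 (Iic x) x := by
        apply (hasDerivWithinAt_const x (Iic x) (0:ℝ)).congr
        · intro y hy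
          rw [hstardef]
          exact if_pos (mem_Iic.mp hy)
        · rw [hstardef, if_pos le_rfl]
      have hIci : HasDerivWithinAt hstar 0 (Ici x) x := by
        have hh := (hF x hx).hasDerivWithinAt (s := Ici x)
        rw [h'θ] at hh
        apply hh.congr
        · intro y hy
          rcases eq_or_lt_of_le (mem_Ici.mp hy) with rfl | hlt
          · rw [hstardef, if_pos le_rfl, hhθ]
          · rw [hstardef, if_neg (not_le.mpr hlt)]
        · rw [hstardef, if_pos le_rfl, hhθ]
      have := hIic.union hIci
      rw [Iic_union_Ici] at this
      exact hasDerivWithinAt_univ.mp this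
    · -- equals h locally
      have : hstar =ᶠ[nhds x] h := by
        filter_upwards [Ioi_mem_nhds hgt] with y hy
        rw [hstardef, if_neg (not_le.mpr hy)]
      rw [Ddef]
      simp only [if_neg (not_le.mpr hgt)]
      exact (hF x hx).congr_of_eventuallyEq this
  -- D is monotone on Ioi 0
  have Dmono : MonotoneOn D (Ioi (0:ℝ)) := by
    intro x hx y hy hxy
    rw [Ddef]
    simp only
    by_cases hyθ : y ≤ θ
    · rw [if_pos (hxy.trans hyθ), if_pos hyθ]
    · rw [if_neg hyθ]
      push_neg at hyθ
      by_cases hxθ : x ≤ θ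
      · rw [if_pos hxθ]
        exact h'nn y (le_of_lt hyθ)
      · rw [if_neg hxθ]
        push_neg at hxθ
        exact mono' (le_of_lt hxθ) (le_of_lt hyθ) hxy
  -- convexity of hstar
  have hconv : ConvexOn ℝ (Ici (0:ℝ)) hstar := by
    apply MonotoneOn.convexOn_of_deriv (convex_Ici 0)
    · intro x hx
      rcases eq_or_lt_of_le (mem_Ici.mp hx) with rfl | hx'
      · have : hstar =ᶠ[nhdsWithin 0 (Ici (0:ℝ))] fun _ => (0:ℝ) := by
          filter_upwards [nhdsWithin_le_nhds (Iio_mem_nhds θpos)] with y hy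
          rw [hstardef, if_pos (le_of_lt hy)]
        have h0 : hstar 0 = (0:ℝ) := by rw [hstardef, if_pos θpos.le]
        exact (continuousWithinAt_const :
          ContinuousWithinAt (fun _ : ℝ => (0:ℝ)) (Ici 0) 0).congr_of_eventuallyEq this h0
      · exact (hD x hx').continuousAt.continuousWithinAt
    · intro x hx
      rw [interior_Ici] at hx
      exact (hD x hx).differentiableAt.differentiableWithinAt
    · intro x hx y hy hxy
      rw [interior_Ici] at hx hy
      rw [(hD x hx).deriv, (hD y hy).deriv]
      exact Dmono hx hy hxy
  refine ⟨hconv, ?_, ?_⟩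
  · intro ρ hρ
    rw [hstardef]
    by_cases hρθ : ρ ≤ θ
    · rw [if_pos hρθ]
      exact hnn ρ hρ
    · rw [if_neg hρθ]
  · intro g hg hgh ρ hρ
    rw [hstardef]
    by_cases hρθ : ρ ≤ θ
    · rw [if_pos hρθ]
      have h0 : g 0 ≤ 0 := (hgh 0 self_mem_Ici).trans_eq hh0
      have hθ0 : g θ ≤ 0 := (hgh θ θpos.le).trans_eq hhθ
      have ha : (0:ℝ) ≤ 1 - ρ / θ := by
        rw [sub_nonneg]
        exact div_le_one_of_le₀ hρθ θpos.le
      have hb' : (0:ℝ) ≤ ρ / θ := div_nonneg hρ θpos.le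
      have hcomb := hg.2 self_mem_Ici (θpos.le : θ ∈ Ici (0:ℝ)) ha hb' (by ring)
      simp only [smul_eq_mul, mul_zero, zero_add, smul_zero] at hcomb
      rw [div_mul_cancel₀ ρ θpos.ne'] at hcomb
      nlinarith [hcomb, mul_nonneg ha (neg_nonneg.mpr h0), mul_nonneg hb' (neg_nonneg.mpr hθ0)]
    · rw [if_neg hρθ]
      exact hgh ρ hρ
end

section
/- Let G be nonnegative, even, integrable on ℝ^d with ∫G = 1/σ, G_ε(x) = ε^{-d}G(x/ε), and for ρ ∈ L¹∩L² set φ_ε = G_ε * ρ. Then (1/2)∫∫ G_ε(x−y)(ρ(x)−ρ(y))² dx dy = σ ∫ (ρ/σ − φ_ε)² dx + ∫ φ_ε (ρ − σ φ_ε) dx. Moreover, if additionally σ φ_ε − ε² Δφ_ε = ρ (i.e., G solves σG − Δ G = δ₀ suitably scaled), then ∫ φ_ε(ρ − σ φ_ε) dx = ε² ∫ |∇φ_ε|² dx, so (1/2)∫∫ G_ε(x−y)(ρ(x)−ρ(y))² dx dy = σ ∫ (ρ/σ − φ_ε)² dx + ε² ∫ |∇φ_ε|² dx. -/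
set_option maxHeartbeats 1000000

open Real MeasureTheory Set
open scoped ENNReal

lemma aux_div_zero {n : ℕ}
    (f : Fin (n+1) → (Fin (n+1) → ℝ) → ℝ)
    (f' : Fin (n+1) → (Fin (n+1) → ℝ) → ((Fin (n+1) → ℝ) →L[ℝ] ℝ))
    (hd : ∀ i x, HasFDerivAt (f i) (f' i x) x)
    (hfi : ∀ i, Integrable (f i))
    (hdi : Integrable (fun x : Fin (n+1) → ℝ => ∑ i, f' i x (Pi.single i 1))) :
    ∫ x : Fin (n+1) → ℝ, ∑ i, f' i x (Pi.single i 1) = 0 := by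
  set D : (Fin (n+1) → ℝ) → ℝ := fun x => ∑ i, f' i x (Pi.single i 1) with hD
  -- measurable representatives
  set fm : Fin (n+1) → (Fin (n+1) → ℝ) → ℝ := fun i => (hfi i).1.mk (f i) with hfm
  have hfm_meas : ∀ i, StronglyMeasurable (fm i) := fun i => (hfi i).1.stronglyMeasurable_mk
  have hae : ∀ i, f i =ᵐ[volume] fm i := fun i => (hfi i).1.ae_eq_mk
  have hfmi : ∀ i, Integrable (fm i) := fun i => (hfi i).congr (hae i)
  -- the measurable equivs
  set Ei : (i : Fin (n+1)) → ((Fin (n+1) → ℝ) ≃ᵐ ℝ × (Fin n → ℝ)) :=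
    fun i => MeasurableEquiv.piFinSuccAbove (fun _ : Fin (n+1) => ℝ) i with hEi
  have hmp : ∀ i, MeasurePreserving (Ei i).symm (volume.prod volume) volume := by
    intro i
    have := (MeasureTheory.volume_preserving_piFinSuccAbove (fun _ : Fin (n+1) => ℝ) i).symm
    exact this
  have hEsymm : ∀ i (p : ℝ × (Fin n → ℝ)), (Ei i).symm p = Fin.insertNth i p.1 p.2 := by
    intro i p; rfl
  -- slice functions
  have hins_meas : ∀ i, Measurable (fun p : ℝ × (Fin n → ℝ) => fm i (Fin.insertNth i p.1 p.2)) := by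
    intro i
    have : Measurable ((Ei i).symm) := (Ei i).symm.measurable
    exact ((hfm_meas i).measurable).comp this
  set H : Fin (n+1) → ℝ → ℝ≥0∞ :=
    fun i t => ∫⁻ y, ‖fm i (Fin.insertNth i t y)‖₊ ∂volume with hH
  have hHmeas : ∀ i, Measurable (H i) := by
    intro i
    exact Measurable.lintegral_prod_right' ((hins_meas i).nnnorm.coe_nnreal_ennreal)
  have hHfin : ∀ i, ∫⁻ t, H i t ∂volume < ⊤ := by
    intro i
    have h1 : ∫⁻ p : ℝ × (Fin n → ℝ), ‖fm i (Fin.insertNth i p.1 p.2)‖₊ ∂(volume.prod volume)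
        = ∫⁻ x, ‖fm i x‖₊ ∂volume := by
      have := (hmp i).lintegral_comp_emb ((Ei i).symm.measurableEmbedding)
        (fun x => (‖fm i x‖₊ : ℝ≥0∞))
      simpa [Function.comp, hEsymm] using this
    have h2 := lintegral_prod (μ := (volume : Measure ℝ)) (ν := (volume : Measure (Fin n → ℝ)))
      (fun p => (‖fm i (Fin.insertNth i p.1 p.2)‖₊ : ℝ≥0∞)) ((hins_meas i).nnnorm.coe_nnreal_ennreal.aemeasurable)
    rw [h2] at h1
    rw [hH]
    simp only []
    rw [h1]
    exact (hfmi i).2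
  set g : ℝ → ℝ≥0∞ := fun t => ∑ i, H i t with hg
  have hgmeas : Measurable g := by
    apply Finset.measurable_sum
    intro i _
    exact hHmeas i
  have hgfin : ∫⁻ t, g t ∂volume < ⊤ := by
    rw [hg]
    simp only []
    rw [lintegral_finset_sum _ (fun i _ => hHmeas i)]
    exact ENNReal.sum_lt_top.2 (fun i _ => hHfin i)
  -- good parameters
  have hsliceint : ∀ i, Integrable (fun p : ℝ × (Fin n → ℝ) => fm i (Fin.insertNth i p.1 p.2))
      (volume.prod volume) := by
    intro i
    have := ((hmp i).integrable_comp_emb ((Ei i).symm.measurableEmbedding)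
      (g := fm i)).2 (hfmi i)
    exact this
  have hsliceeq : ∀ i, (fun p : ℝ × (Fin n → ℝ) => f i (Fin.insertNth i p.1 p.2))
      =ᵐ[volume.prod volume] (fun p => fm i (Fin.insertNth i p.1 p.2)) := by
    intro i
    have := (hmp i).quasiMeasurePreserving.ae_eq_comp (hae i)
    exact this
  set Good : ℝ → Prop := fun t => ∀ i, Integrable (fun y => fm i (Fin.insertNth i t y)) volume ∧
    (fun y => f i (Fin.insertNth i t y)) =ᵐ[volume] (fun y => fm i (Fin.insertNth i t y)) with hGood
  have hgood_ae : ∀ᵐ t : ℝ, Good t := by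
    rw [ae_all_iff]
    intro i
    have h1 := (hsliceint i).prod_right_ae
    have h2 := MeasureTheory.Measure.ae_ae_of_ae_prod (hsliceeq i)
    filter_upwards [h1, h2] with t ht1 ht2 using ⟨ht1, ht2⟩
  have hgood_neg_ae : ∀ᵐ t : ℝ, Good t ∧ Good (-t) := by
    refine hgood_ae.and ?_
    have hneg : MeasurePreserving (fun t : ℝ => -t) volume volume :=
      Measure.measurePreserving_neg volume
    exact hneg.quasiMeasurePreserving.ae hgood_ae
  -- main estimate
  suffices hmain : ∀ δ : ℝ, 0 < δ → |∫ x, D x| ≤ 3 * δ by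
    by_contra hL
    have h0 : 0 < |∫ x, D x| := abs_pos.2 hL
    have := hmain (|∫ x, D x| / 4) (by linarith)
    linarith
  intro δ hδ
  have hDnorm : Integrable (fun x => ‖D x‖) := hdi.norm
  -- tail estimate
  have htail : Filter.Tendsto
      (fun k : ℕ => ∫ x in (Icc (fun _ : Fin (n+1) => -(k:ℝ)) fun _ => (k:ℝ))ᶜ, ‖D x‖)
      Filter.atTop (nhds 0) := by
    have h0 : (0:ℝ) = ∫ x : Fin (n+1) → ℝ, (0:ℝ) := by simp
    rw [h0]
    have hT := tendsto_integral_of_dominated_convergence (μ := (volume : Measure (Fin (n+1) → ℝ)))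
      (F := fun k x => ((Icc (fun _ : Fin (n+1) => -(k:ℝ)) fun _ => (k:ℝ))ᶜ).indicator
        (fun x => ‖D x‖) x)
      (f := fun _ => (0:ℝ)) (bound := fun x => ‖D x‖)
      (fun k => hDnorm.aestronglyMeasurable.indicator measurableSet_Icc.compl)
      hDnorm
      (fun k => Filter.Eventually.of_forall fun x => by
        simpa using norm_indicator_le_norm_self
          (s := (Icc (fun _ : Fin (n+1) => -(k:ℝ)) fun _ => (k:ℝ))ᶜ) (fun x => ‖D x‖) x)
      (Filter.Eventually.of_forall fun x => by
        obtain ⟨k0, hk0⟩ := exists_nat_ge ‖x‖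
        apply Filter.Tendsto.congr' (f₁ := fun _ => (0:ℝ)) _ tendsto_const_nhds
        filter_upwards [Filter.eventually_ge_atTop k0] with k hkk
        have hxmem : x ∈ Icc (fun _ : Fin (n+1) => -(k:ℝ)) fun _ => (k:ℝ) := by
          constructor <;> intro j
          · have := abs_le.1 ((norm_le_pi_norm x j).trans (hk0.trans (Nat.cast_le.2 hkk)))
            simpa using this.1
          · have := abs_le.1 ((norm_le_pi_norm x j).trans (hk0.trans (Nat.cast_le.2 hkk)))
            simpa using this.2
        simp [Set.indicator_of_notMem, hxmem])
    convert hT using 2 with k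
    rw [integral_indicator measurableSet_Icc.compl]
  obtain ⟨k, hk⟩ : ∃ k : ℕ,
      ∫ x in (Icc (fun _ : Fin (n+1) => -(k:ℝ)) fun _ => (k:ℝ))ᶜ, ‖D x‖ ≤ δ := by
    have := (htail.eventually_lt_const hδ).exists
    obtain ⟨k, hk⟩ := this
    exact ⟨k, hk.le⟩
  -- Markov bad sets
  set δe := ENNReal.ofReal δ with hδe_def
  have hδe : δe ≠ 0 := (ENNReal.ofReal_pos.2 hδ).ne'
  have hB1 : volume {t : ℝ | δe ≤ g t} < ⊤ := by
    by_contra hcon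
    push_neg at hcon
    have h := mul_meas_ge_le_lintegral₀ (μ := (volume : Measure ℝ)) hgmeas.aemeasurable δe
    rw [top_le_iff.1 hcon] at h
    rw [ENNReal.mul_top hδe] at h
    exact absurd (top_le_iff.1 h) hgfin.ne
  have hnegmp : MeasurePreserving (fun t : ℝ => -t) volume volume :=
    Measure.measurePreserving_neg volume
  have hB2 : volume {t : ℝ | δe ≤ g (-t)} < ⊤ := by
    have hmeas : MeasurableSet {t : ℝ | δe ≤ g t} := measurableSet_le measurable_const hgmeas
    have : {t : ℝ | δe ≤ g (-t)} = (fun t : ℝ => -t) ⁻¹' {t : ℝ | δe ≤ g t} := rfl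
    rw [this, hnegmp.measure_preimage hmeas.nullMeasurableSet]
    exact hB1
  have hBad : volume ({t : ℝ | δe ≤ g t} ∪ {t : ℝ | δe ≤ g (-t)}
      ∪ {t : ℝ | ¬ (Good t ∧ Good (-t))}) < ⊤ := by
    have hnull : volume {t : ℝ | ¬ (Good t ∧ Good (-t))} = 0 := hgood_neg_ae
    calc volume _ ≤ volume ({t : ℝ | δe ≤ g t} ∪ {t : ℝ | δe ≤ g (-t)})
          + volume {t : ℝ | ¬ (Good t ∧ Good (-t))} := measure_union_le _ _
      _ ≤ volume {t : ℝ | δe ≤ g t} + volume {t : ℝ | δe ≤ g (-t)} + 0 := by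
          rw [hnull]; exact add_le_add_left (measure_union_le _ _) 0
      _ < ⊤ := by rw [add_zero]; exact ENNReal.add_lt_top.2 ⟨hB1, hB2⟩
  obtain ⟨R, hRmem, hRgood⟩ : ∃ R : ℝ, R ∈ Ioi (k:ℝ) ∧ R ∉ ({t : ℝ | δe ≤ g t}
      ∪ {t : ℝ | δe ≤ g (-t)} ∪ {t : ℝ | ¬ (Good t ∧ Good (-t))}) := by
    have hne : ¬ (Ioi (k:ℝ) ⊆ ({t : ℝ | δe ≤ g t} ∪ {t : ℝ | δe ≤ g (-t)}
        ∪ {t : ℝ | ¬ (Good t ∧ Good (-t))})) := by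
      intro hsub
      have := measure_mono (μ := (volume : Measure ℝ)) hsub
      rw [Real.volume_Ioi] at this
      exact absurd (top_le_iff.1 this) hBad.ne
    obtain ⟨R, hRmem, hRnot⟩ := Set.not_subset.1 hne
    exact ⟨R, hRmem, hRnot⟩
  simp only [Set.mem_union, Set.mem_setOf_eq, not_or, not_le, not_not] at hRgood
  obtain ⟨⟨hgR, hgnR⟩, hGoodR, hGoodnR⟩ := hRgood
  have hRk : (k:ℝ) < R := hRmem
  have hRpos : (0:ℝ) < R := lt_of_le_of_lt (Nat.cast_nonneg k) hRk
  set a : Fin (n+1) → ℝ := fun _ => -R with ha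
  set b : Fin (n+1) → ℝ := fun _ => R with hb
  have hab : a ≤ b := fun i => by simp [ha, hb]; linarith
  have hkey := integral_divergence_of_hasFDerivAt_off_countable' a b hab f f' ∅
    Set.countable_empty
    (fun i => fun x _ => ((hd i x).differentiableAt).continuousAt.continuousWithinAt)
    (fun x _ i => hd i x) (hdi.integrableOn)
  -- face bounds
  have hface : ∀ (i : Fin (n+1)) (t : ℝ), Good t →
      |∫ y in Icc (a ∘ i.succAbove) (b ∘ i.succAbove), f i (i.insertNth t y)| ≤ (H i t).toReal := by
    intro i t hGt
    obtain ⟨hsi, heq⟩ := hGt i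
    have h1 : ∫ y in Icc (a ∘ i.succAbove) (b ∘ i.succAbove), f i (i.insertNth t y)
        = ∫ y in Icc (a ∘ i.succAbove) (b ∘ i.succAbove), fm i (i.insertNth t y) :=
      integral_congr_ae (ae_restrict_of_ae heq)
    rw [h1]
    calc |∫ y in Icc (a ∘ i.succAbove) (b ∘ i.succAbove), fm i (i.insertNth t y)|
        ≤ ∫ y in Icc (a ∘ i.succAbove) (b ∘ i.succAbove), ‖fm i (i.insertNth t y)‖ :=
          by rw [← Real.norm_eq_abs]; exact norm_integral_le_integral_norm _
      _ ≤ ∫ y, ‖fm i (i.insertNth t y)‖ :=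
          setIntegral_le_integral hsi.norm (Filter.Eventually.of_forall fun y => norm_nonneg _)
      _ = (H i t).toReal := by
          rw [integral_norm_eq_lintegral_enorm hsi.aestronglyMeasurable]; rfl
  have hgRt : (g R).toReal ≤ δ := ENNReal.toReal_le_of_le_ofReal hδ.le hgR.le
  have hgnRt : (g (-R)).toReal ≤ δ := ENNReal.toReal_le_of_le_ofReal hδ.le hgnR.le
  have hfinR : ∀ i : Fin (n+1), H i R ≠ ⊤ := fun i =>
    (lt_of_le_of_lt (Finset.single_le_sum (f := fun j => H j R) (fun j _ => zero_le)
      (Finset.mem_univ i)) (hgR.trans_le le_top)).ne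
  have hfinnR : ∀ i : Fin (n+1), H i (-R) ≠ ⊤ := fun i =>
    (lt_of_le_of_lt (Finset.single_le_sum (f := fun j => H j (-R)) (fun j _ => zero_le)
      (Finset.mem_univ i)) (hgnR.trans_le le_top)).ne
  have hIccsum : |∫ x in Icc a b, D x| ≤ 2 * δ := by
    have hkey' : ∫ x in Icc a b, D x = ∑ i : Fin (n+1),
        ((∫ y in Icc (a ∘ i.succAbove) (b ∘ i.succAbove), f i (i.insertNth R y)) -
         ∫ y in Icc (a ∘ i.succAbove) (b ∘ i.succAbove), f i (i.insertNth (-R) y)) := hkey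
    rw [hkey']
    calc |∑ i : Fin (n+1),
        ((∫ y in Icc (a ∘ i.succAbove) (b ∘ i.succAbove), f i (i.insertNth R y)) -
         ∫ y in Icc (a ∘ i.succAbove) (b ∘ i.succAbove), f i (i.insertNth (-R) y))|
        ≤ ∑ i : Fin (n+1),
        |(∫ y in Icc (a ∘ i.succAbove) (b ∘ i.succAbove), f i (i.insertNth R y)) -
         ∫ y in Icc (a ∘ i.succAbove) (b ∘ i.succAbove), f i (i.insertNth (-R) y)| :=
          Finset.abs_sum_le_sum_abs _ _
      _ ≤ ∑ i : Fin (n+1), ((H i R).toReal + (H i (-R)).toReal) := by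
          apply Finset.sum_le_sum
          intro i _
          refine (abs_sub _ _).trans ?_
          exact add_le_add (hface i R hGoodR) (hface i (-R) hGoodnR)
      _ = (∑ i : Fin (n+1), H i R).toReal + (∑ i : Fin (n+1), H i (-R)).toReal := by
          rw [Finset.sum_add_distrib, ENNReal.toReal_sum (fun i _ => hfinR i),
            ENNReal.toReal_sum (fun i _ => hfinnR i)]
      _ = (g R).toReal + (g (-R)).toReal := rfl
      _ ≤ δ + δ := add_le_add hgRt hgnRt
      _ = 2 * δ := by ring
  have hsplit := integral_add_compl (measurableSet_Icc : MeasurableSet (Icc a b)) hdi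
  have hsub : Icc (fun _ : Fin (n+1) => -(k:ℝ)) (fun _ => (k:ℝ)) ⊆ Icc a b := by
    apply Icc_subset_Icc <;> intro i <;> simp only [ha, hb] <;> linarith
  have hcompl : |∫ x in (Icc a b)ᶜ, D x| ≤ δ := by
    calc |∫ x in (Icc a b)ᶜ, D x| ≤ ∫ x in (Icc a b)ᶜ, ‖D x‖ := by
          rw [← Real.norm_eq_abs]; exact norm_integral_le_integral_norm _
      _ ≤ ∫ x in (Icc (fun _ : Fin (n+1) => -(k:ℝ)) fun _ => (k:ℝ))ᶜ, ‖D x‖ :=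
          setIntegral_mono_set hDnorm.integrableOn
            (Filter.Eventually.of_forall fun x => norm_nonneg _)
            (HasSubset.Subset.eventuallyLE (Set.compl_subset_compl.2 hsub))
      _ ≤ δ := hk
  calc |∫ x, D x| = |(∫ x in Icc a b, D x) + ∫ x in (Icc a b)ᶜ, D x| := by rw [hsplit]
    _ ≤ |∫ x in Icc a b, D x| + |∫ x in (Icc a b)ᶜ, D x| := abs_add_le _ _
    _ ≤ 2 * δ + δ := add_le_add hIccsum hcompl
    _ = 3 * δ := by ring

lemma aux_ibp_euclidean {d : ℕ} (hd : 1 ≤ d) (φ : EuclideanSpace ℝ (Fin d) → ℝ)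
    (hφ : ContDiff ℝ 2 φ)
    (h2 : Integrable (fun x => φ x ^ 2))
    (h4 : Integrable (fun x => ‖gradient φ x‖ ^ 2))
    (hmix : Integrable (fun x => φ x * ∑ i, iteratedFDeriv ℝ 2 φ x
      ![EuclideanSpace.single i 1, EuclideanSpace.single i 1])) :
    ∫ x, φ x * (∑ i, iteratedFDeriv ℝ 2 φ x
        ![EuclideanSpace.single i 1, EuclideanSpace.single i 1])
      = - ∫ x, ‖gradient φ x‖ ^ 2 := by
  obtain ⟨n, rfl⟩ : ∃ n, d = n + 1 := ⟨d - 1, (Nat.succ_pred_eq_of_pos hd).symm⟩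
  set eL : (Fin (n+1) → ℝ) → EuclideanSpace ℝ (Fin (n+1)) :=
    fun p => (EuclideanSpace.equiv (Fin (n+1)) ℝ).symm p with heL
  -- basic differentiability
  have hφ1 : Differentiable ℝ φ := hφ.differentiable (by norm_num)
  have hfd : Differentiable ℝ (fderiv ℝ φ) :=
    (hφ.fderiv_right (m := 1) (by norm_num)).differentiable one_ne_zero
  set gi : Fin (n+1) → EuclideanSpace ℝ (Fin (n+1)) → ℝ := fun i z => fderiv ℝ φ z (EuclideanSpace.single i 1) with hgi
  set Gd : Fin (n+1) → EuclideanSpace ℝ (Fin (n+1)) → (EuclideanSpace ℝ (Fin (n+1)) →L[ℝ] ℝ) := fun i z =>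
    (ContinuousLinearMap.apply ℝ ℝ (EuclideanSpace.single i (1:ℝ))).comp
      (fderiv ℝ (fderiv ℝ φ) z) with hGd
  have hgideriv : ∀ i (z : EuclideanSpace ℝ (Fin (n+1))), HasFDerivAt (gi i) (Gd i z) z := fun i z =>
    ((ContinuousLinearMap.apply ℝ ℝ (EuclideanSpace.single i (1:ℝ))).hasFDerivAt).comp z
      (hfd z).hasFDerivAt
  have hgicont : ∀ i, Continuous (gi i) := fun i =>
    ((ContinuousLinearMap.apply ℝ ℝ (EuclideanSpace.single i (1:ℝ))).continuous).comp
      (hφ.fderiv_right (m := 1) (by norm_num)).continuous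
  -- pointwise identities
  have hgrad_coord : ∀ (z : EuclideanSpace ℝ (Fin (n+1))) (i : Fin (n+1)), gradient φ z i = gi i z := by
    intro z i
    have h1 : (inner ℝ (gradient φ z) (EuclideanSpace.single i (1:ℝ)) : ℝ)
        = fderiv ℝ φ z (EuclideanSpace.single i 1) := InnerProductSpace.toDual_symm_apply
    have h2' : (inner ℝ (gradient φ z) (EuclideanSpace.single i (1:ℝ)) : ℝ) = gradient φ z i := by
      rw [EuclideanSpace.inner_single_right]; simp
    rw [← h2', h1]
  have hnorm : ∀ z : EuclideanSpace ℝ (Fin (n+1)), ‖gradient φ z‖ ^ 2 = ∑ i, (gi i z) ^ 2 := by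
    intro z
    rw [← real_inner_self_eq_norm_sq]
    rw [PiLp.inner_apply]
    refine Finset.sum_congr rfl fun i _ => ?_
    rw [hgrad_coord z i]
    simp [RCLike.inner_apply, sq]
  have hiter : ∀ (z : EuclideanSpace ℝ (Fin (n+1))) (i : Fin (n+1)),
      iteratedFDeriv ℝ 2 φ z ![EuclideanSpace.single i 1, EuclideanSpace.single i 1]
        = Gd i z (EuclideanSpace.single i 1) := by
    intro z i
    rw [iteratedFDeriv_two_apply]
    simp [hGd]
  -- the pi-space data
  set fP : Fin (n+1) → (Fin (n+1) → ℝ) → ℝ := fun i x => φ (eL x) * gi i (eL x) with hfP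
  set fP' : Fin (n+1) → (Fin (n+1) → ℝ) → ((Fin (n+1) → ℝ) →L[ℝ] ℝ) := fun i x =>
    ((φ (eL x)) • (Gd i (eL x)) + (gi i (eL x)) • (fderiv ℝ φ (eL x))).comp
      ((EuclideanSpace.equiv (Fin (n+1)) ℝ).symm : (Fin (n+1) → ℝ) →L[ℝ] EuclideanSpace ℝ (Fin (n+1))) with hfP'
  have hPd : ∀ i x, HasFDerivAt (fP i) (fP' i x) x := by
    intro i x
    exact ((hφ1 (eL x)).hasFDerivAt.mul (hgideriv i (eL x))).comp x
      ((EuclideanSpace.equiv (Fin (n+1)) ℝ).symm.hasFDerivAt)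
  have hdiv : ∀ x : Fin (n+1) → ℝ, ∑ i, fP' i x (Pi.single i 1)
      = ‖gradient φ (eL x)‖ ^ 2 + φ (eL x) * ∑ i, iteratedFDeriv ℝ 2 φ (eL x)
        ![EuclideanSpace.single i 1, EuclideanSpace.single i 1] := by
    intro x
    have hsingle : ∀ i : Fin (n+1),
        (EuclideanSpace.equiv (Fin (n+1)) ℝ).symm (Pi.single i (1:ℝ))
          = EuclideanSpace.single i (1:ℝ) := fun i => rfl
    have hterm : ∀ i : Fin (n+1), fP' i x (Pi.single i 1)
        = φ (eL x) * (Gd i (eL x) (EuclideanSpace.single i 1)) + (gi i (eL x)) ^ 2 := by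
      intro i
      rw [hfP']
      simp only [ContinuousLinearMap.coe_comp', Function.comp_apply,
        ContinuousLinearMap.coe_coe, ContinuousLinearMap.add_apply,
        ContinuousLinearMap.coe_smul', Pi.smul_apply, smul_eq_mul]
      have e1 : ((EuclideanSpace.equiv (Fin (n+1)) ℝ).symm :
          (Fin (n+1) → ℝ) →L[ℝ] EuclideanSpace ℝ (Fin (n+1))) (Pi.single i 1)
          = EuclideanSpace.single i (1:ℝ) := rfl
      rw [e1]
      have e2 : fderiv ℝ φ (eL x) (EuclideanSpace.single i 1) = gi i (eL x) := rfl
      rw [e2]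
      ring
    rw [Finset.sum_congr rfl (fun i _ => hterm i), Finset.sum_add_distrib, ← Finset.mul_sum]
    rw [hnorm (eL x)]
    rw [Finset.sum_congr rfl (fun i _ => (hiter (eL x) i).symm)]
    ring
  -- measure preserving transfer
  have hmp : MeasurePreserving (MeasurableEquiv.toLp 2 (Fin (n+1) → ℝ))
      (volume : Measure (Fin (n+1) → ℝ)) (volume : Measure (EuclideanSpace ℝ (Fin (n+1)))) :=
    (EuclideanSpace.volume_preserving_symm_measurableEquiv_toLp (Fin (n+1))).symm _
  have htrans : ∀ (u : EuclideanSpace ℝ (Fin (n+1)) → ℝ), Integrable u (volume : Measure (EuclideanSpace ℝ (Fin (n+1)))) →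
      Integrable (fun x : Fin (n+1) → ℝ => u (eL x)) volume := by
    intro u hu
    exact (hmp.integrable_comp_emb
      (MeasurableEquiv.toLp 2 (Fin (n+1) → ℝ)).measurableEmbedding).2 hu
  have htrans_int : ∀ (u : EuclideanSpace ℝ (Fin (n+1)) → ℝ), Integrable u (volume : Measure (EuclideanSpace ℝ (Fin (n+1)))) →
      ∫ x : Fin (n+1) → ℝ, u (eL x) = ∫ z : EuclideanSpace ℝ (Fin (n+1)), u z := by
    intro u hu
    exact hmp.integral_comp
      (MeasurableEquiv.toLp 2 (Fin (n+1) → ℝ)).measurableEmbedding u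
  -- integrability of the pieces
  have hgi_int : ∀ i, Integrable (fun z : EuclideanSpace ℝ (Fin (n+1)) => φ z * gi i z) := by
    intro i
    refine Integrable.mono' ((h2.add h4).const_mul (1/2))
      ((hφ.continuous.mul (hgicont i)).aestronglyMeasurable)
      (Filter.Eventually.of_forall fun z => ?_)
    have hb : |gi i z| ≤ ‖gradient φ z‖ := by
      have : gi i z = (inner ℝ (gradient φ z) (EuclideanSpace.single i (1:ℝ)) : ℝ) :=
        (InnerProductSpace.toDual_symm_apply).symm
      rw [this]
      calc |(inner ℝ (gradient φ z) (EuclideanSpace.single i (1:ℝ)) : ℝ)|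
          ≤ ‖gradient φ z‖ * ‖EuclideanSpace.single i (1:ℝ)‖ := abs_real_inner_le_norm _ _
        _ = ‖gradient φ z‖ := by simp [EuclideanSpace.norm_single]
    have habs := abs_mul (φ z) (gi i z)
    have h1 : |φ z| * |gi i z| ≤ (1/2) * (φ z ^ 2 + ‖gradient φ z‖ ^ 2) := by
      nlinarith [hb, sq_abs (φ z), sq_abs (gi i z), sq_nonneg (|φ z| - |gi i z|),
        abs_nonneg (φ z), abs_nonneg (gi i z), norm_nonneg (gradient φ z)]
    calc ‖φ z * gi i z‖ = |φ z| * |gi i z| := by rw [Real.norm_eq_abs, abs_mul]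
      _ ≤ (1/2) * (φ z ^ 2 + ‖gradient φ z‖ ^ 2) := h1
  have hP_int : ∀ i, Integrable (fP i) := fun i => htrans _ (hgi_int i)
  have hdiv_int : Integrable (fun x : Fin (n+1) → ℝ => ∑ i, fP' i x (Pi.single i 1)) := by
    refine (htrans _ (h4.add hmix)).congr
      (Filter.Eventually.of_forall fun x => ?_)
    exact (hdiv x).symm
  -- conclude
  have hzero := aux_div_zero fP fP' hPd hP_int hdiv_int
  have hIsum : Integrable (fun z : EuclideanSpace ℝ (Fin (n+1)) => ‖gradient φ z‖ ^ 2
      + φ z * ∑ i, iteratedFDeriv ℝ 2 φ z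
        ![EuclideanSpace.single i 1, EuclideanSpace.single i 1]) := h4.add hmix
  have hEq : ∫ z : EuclideanSpace ℝ (Fin (n+1)), (‖gradient φ z‖ ^ 2 + φ z * ∑ i, iteratedFDeriv ℝ 2 φ z
      ![EuclideanSpace.single i 1, EuclideanSpace.single i 1]) = 0 := by
    rw [← htrans_int _ hIsum]
    rw [← hzero]
    exact integral_congr_ae (Filter.Eventually.of_forall fun x => (hdiv x).symm)
  rw [integral_add h4 hmix] at hEq
  linarith

open scoped Real in
theorem stmt_16 (d : ℕ) (hd : 1 ≤ d) (σ : ℝ) (hσ : 0 < σ) (ε : ℝ) (hε : 0 < ε)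
    (G : EuclideanSpace ℝ (Fin d) → ℝ)
    (hGint : Integrable G) (hGeven : ∀ x, G (-x) = G x) (hGnn : ∀ x, 0 ≤ G x)
    (hGmass : ∫ x, G x = 1 / σ)
    (Gε : EuclideanSpace ℝ (Fin d) → ℝ)
    (hGε : ∀ x, Gε x = ε ^ (-(d : ℝ)) * G (ε⁻¹ • x))
    (ρ : EuclideanSpace ℝ (Fin d) → ℝ)
    (hρint : Integrable ρ) (hρsq : Integrable (fun x => (ρ x) ^ 2))
    (φε : EuclideanSpace ℝ (Fin d) → ℝ)
    (hφε : ∀ x, φε x = ∫ y, Gε (x - y) * ρ y)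
    (hφsm : ContDiff ℝ 2 φε)
    (hint1 : Integrable (fun p : EuclideanSpace ℝ (Fin d) × EuclideanSpace ℝ (Fin d) =>
      Gε (p.1 - p.2) * (ρ p.1 - ρ p.2) ^ 2))
    (hint2 : Integrable (fun x => (ρ x / σ - φε x) ^ 2))
    (hint3 : Integrable (fun x => φε x * (ρ x - σ * φε x)))
    (hint4 : Integrable (fun x => ‖gradient φε x‖ ^ 2)) :
    ((1 / 2 : ℝ) * ∫ p : EuclideanSpace ℝ (Fin d) × EuclideanSpace ℝ (Fin d),
        Gε (p.1 - p.2) * (ρ p.1 - ρ p.2) ^ 2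
      = σ * (∫ x, (ρ x / σ - φε x) ^ 2) + ∫ x, φε x * (ρ x - σ * φε x)) ∧
    ((∀ x, σ * φε x - ε ^ 2 * (∑ i, iteratedFDeriv ℝ 2 φε x
          ![EuclideanSpace.single i 1, EuclideanSpace.single i 1]) = ρ x) →
      (∫ x, φε x * (ρ x - σ * φε x) = ε ^ 2 * ∫ x, ‖gradient φε x‖ ^ 2) ∧
      (1 / 2 : ℝ) * ∫ p : EuclideanSpace ℝ (Fin d) × EuclideanSpace ℝ (Fin d),
          Gε (p.1 - p.2) * (ρ p.1 - ρ p.2) ^ 2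
        = σ * (∫ x, (ρ x / σ - φε x) ^ 2) + ε ^ 2 * ∫ x, ‖gradient φε x‖ ^ 2) := by
  have hσne : σ ≠ 0 := hσ.ne'
  have hεne : ε ≠ 0 := hε.ne'
  have hGεeq : Gε = fun x => ε ^ (-(d:ℝ)) * G (ε⁻¹ • x) := funext hGε
  have hGεint : Integrable Gε := by
    rw [hGεeq]
    exact (hGint.comp_smul (inv_ne_zero hεne)).const_mul _
  have hGεnn : ∀ x, 0 ≤ Gε x := fun x => by
    rw [hGε]
    have h1 : (0:ℝ) ≤ ε ^ (-(d:ℝ)) := (Real.rpow_pos_of_pos hε _).le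
    exact mul_nonneg h1 (hGnn _)
  have hGεeven : ∀ x, Gε (-x) = Gε x := fun x => by
    rw [hGε, hGε, smul_neg, hGeven]
  have hGεmass : ∫ x, Gε x = 1/σ := by
    rw [hGεeq, MeasureTheory.integral_const_mul,
      MeasureTheory.Measure.integral_comp_inv_smul volume (fun x => G x) ε,
      finrank_euclideanSpace_fin, hGmass, abs_of_nonneg (pow_nonneg hε.le d), smul_eq_mul,
      Real.rpow_neg hε.le, Real.rpow_natCast]
    field_simp
  -- product integrability
  have hρm := hρint.aestronglyMeasurable
  have hGsub_aesm : AEStronglyMeasurable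
      (fun p : EuclideanSpace ℝ (Fin d) × EuclideanSpace ℝ (Fin d) => Gε (p.1 - p.2))
      (volume.prod volume) :=
    hGεint.aestronglyMeasurable.comp_quasiMeasurePreserving
      (quasiMeasurePreserving_sub volume volume)
  have hprod1 : Integrable
      (fun p : EuclideanSpace ℝ (Fin d) × EuclideanSpace ℝ (Fin d) => Gε p.1 * (ρ p.2)^2)
      (volume.prod volume) := hGεint.mul_prod hρsq
  have hS : MeasurePreserving
      (fun z : EuclideanSpace ℝ (Fin d) × EuclideanSpace ℝ (Fin d) => (z.1 - z.2, z.2))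
      (volume.prod volume) (volume.prod volume) := measurePreserving_sub_prod volume volume
  have hemb : MeasurableEmbedding
      (fun z : EuclideanSpace ℝ (Fin d) × EuclideanSpace ℝ (Fin d) => (z.1 - z.2, z.2)) := by
    have h := (MeasurableEquiv.prodComm.trans
      ((MeasurableEquiv.shearSubRight (EuclideanSpace ℝ (Fin d))).trans
        MeasurableEquiv.prodComm)).measurableEmbedding
    convert h using 1
    funext z; rfl
  have hA1 : Integrable
      (fun p : EuclideanSpace ℝ (Fin d) × EuclideanSpace ℝ (Fin d) => Gε (p.1 - p.2) * (ρ p.2)^2)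
      (volume.prod volume) := by
    have := (hS.integrable_comp_emb hemb (g := fun p => Gε p.1 * (ρ p.2)^2)).2 hprod1
    simpa [Function.comp_def] using this
  have hswapemb : MeasurableEmbedding
      (Prod.swap : EuclideanSpace ℝ (Fin d) × EuclideanSpace ℝ (Fin d) → _) :=
    MeasurableEquiv.prodComm.measurableEmbedding
  have hswapmp : MeasurePreserving
      (Prod.swap : EuclideanSpace ℝ (Fin d) × EuclideanSpace ℝ (Fin d) → _)
      (volume.prod volume) (volume.prod volume) := Measure.measurePreserving_swap
  have hA2 : Integrable
      (fun p : EuclideanSpace ℝ (Fin d) × EuclideanSpace ℝ (Fin d) => Gε (p.1 - p.2) * (ρ p.1)^2)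
      (volume.prod volume) := by
    have h := (hswapmp.integrable_comp_emb hswapemb
      (g := fun p => Gε (p.1 - p.2) * (ρ p.2)^2)).2 hA1
    refine h.congr (Filter.Eventually.of_forall fun p => ?_)
    simp only [Function.comp, Prod.fst_swap, Prod.snd_swap]
    rw [show p.2 - p.1 = -(p.1 - p.2) from (neg_sub p.1 p.2).symm, hGεeven]
  have hA3 : Integrable
      (fun p : EuclideanSpace ℝ (Fin d) × EuclideanSpace ℝ (Fin d) =>
        Gε (p.1 - p.2) * (ρ p.1 * ρ p.2)) (volume.prod volume) := by
    refine Integrable.mono' ((hA2.add hA1).const_mul (1/2))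
      (hGsub_aesm.mul ((hρm.comp_fst).mul (hρm.comp_snd)))
      (Filter.Eventually.of_forall fun p => ?_)
    have h0 := hGεnn (p.1 - p.2)
    rw [Real.norm_eq_abs, abs_mul, abs_of_nonneg h0, abs_mul]
    simp only [Pi.add_apply]
    nlinarith [sq_nonneg (|ρ p.1| - |ρ p.2|), sq_abs (ρ p.1), sq_abs (ρ p.2),
      abs_nonneg (ρ p.1), abs_nonneg (ρ p.2),
      mul_nonneg (mul_nonneg h0 (abs_nonneg (ρ p.1))) (abs_nonneg (ρ p.2))]
  -- values of the three double integrals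
  have hval_A1 : ∫ p : EuclideanSpace ℝ (Fin d) × EuclideanSpace ℝ (Fin d),
      Gε (p.1 - p.2) * (ρ p.2)^2 ∂(volume.prod volume) = (1/σ) * ∫ x, ρ x ^ 2 := by
    have h1 : ∫ p : EuclideanSpace ℝ (Fin d) × EuclideanSpace ℝ (Fin d),
        Gε p.1 * (ρ p.2)^2 ∂(volume.prod volume) = (1/σ) * ∫ x, ρ x ^ 2 := by
      rw [MeasureTheory.integral_prod_mul (f := Gε) (g := fun x => ρ x ^ 2), hGεmass]
    rw [← h1]
    have := hS.integral_comp hemb (fun p : EuclideanSpace ℝ (Fin d) × EuclideanSpace ℝ (Fin d) =>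
      Gε p.1 * (ρ p.2)^2)
    simpa [Function.comp] using this
  have hval_A2 : ∫ p : EuclideanSpace ℝ (Fin d) × EuclideanSpace ℝ (Fin d),
      Gε (p.1 - p.2) * (ρ p.1)^2 ∂(volume.prod volume) = (1/σ) * ∫ x, ρ x ^ 2 := by
    rw [← hval_A1]
    have h := hswapmp.integral_comp hswapemb
      (fun p : EuclideanSpace ℝ (Fin d) × EuclideanSpace ℝ (Fin d) => Gε (p.1 - p.2) * (ρ p.2)^2)
    rw [← h]
    refine integral_congr_ae (Filter.Eventually.of_forall fun p => ?_)
    simp only [Function.comp, Prod.fst_swap, Prod.snd_swap]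
    rw [show p.2 - p.1 = -(p.1 - p.2) from (neg_sub p.1 p.2).symm, hGεeven]
  have hval_A3 : ∫ p : EuclideanSpace ℝ (Fin d) × EuclideanSpace ℝ (Fin d),
      Gε (p.1 - p.2) * (ρ p.1 * ρ p.2) ∂(volume.prod volume) = ∫ x, ρ x * φε x := by
    rw [MeasureTheory.integral_prod _ hA3]
    refine integral_congr_ae (Filter.Eventually.of_forall fun x => ?_)
    show ∫ y, Gε (x - y) * (ρ x * ρ y) = ρ x * φε x
    have h1 : ∀ y, Gε (x - y) * (ρ x * ρ y) = ρ x * (Gε (x - y) * ρ y) := fun y => by ring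
    rw [integral_congr_ae (Filter.Eventually.of_forall h1), MeasureTheory.integral_const_mul,
      ← hφε x]
  -- splitting the double integral
  have hsplit1 : ∫ p : EuclideanSpace ℝ (Fin d) × EuclideanSpace ℝ (Fin d),
      Gε (p.1 - p.2) * (ρ p.1 - ρ p.2)^2
      = (1/σ) * (∫ x, ρ x ^ 2) + (1/σ) * (∫ x, ρ x ^ 2) - 2 * ∫ x, ρ x * φε x := by
    rw [Measure.volume_eq_prod]
    have hptwise : ∀ p : EuclideanSpace ℝ (Fin d) × EuclideanSpace ℝ (Fin d),
        Gε (p.1 - p.2) * (ρ p.1 - ρ p.2)^2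
        = (Gε (p.1 - p.2) * (ρ p.1)^2 + Gε (p.1 - p.2) * (ρ p.2)^2)
          - 2 * (Gε (p.1 - p.2) * (ρ p.1 * ρ p.2)) := fun p => by ring
    rw [integral_congr_ae (Filter.Eventually.of_forall hptwise)]
    have hA12 : Integrable (fun p : EuclideanSpace ℝ (Fin d) × EuclideanSpace ℝ (Fin d) =>
        Gε (p.1 - p.2) * (ρ p.1)^2 + Gε (p.1 - p.2) * (ρ p.2)^2) (volume.prod volume) :=
      hA2.add hA1
    rw [integral_sub hA12 (hA3.const_mul 2), integral_add hA2 hA1,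
      MeasureTheory.integral_const_mul, hval_A1, hval_A2, hval_A3]
  -- integrability of φ², ρφ
  have hphi2 : Integrable (fun x => φε x ^ 2) := by
    have hid : (fun x => φε x^2) = fun x =>
        (1/σ^2) * ρ x^2 - (2/σ) * (φε x * (ρ x - σ * φε x)) - (ρ x / σ - φε x)^2 := by
      funext x; field_simp; ring
    rw [hid]
    exact ((hρsq.const_mul _).sub (hint3.const_mul _)).sub hint2
  have hρφ : Integrable (fun x => ρ x * φε x) := by
    have hid : (fun x => ρ x * φε x) = fun x =>
        (φε x * (ρ x - σ * φε x)) + σ * (φε x^2) := by funext x; ring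
    rw [hid]; exact hint3.add (hphi2.const_mul σ)
  have hval2 : ∫ x, (ρ x / σ - φε x)^2
      = (1/σ^2) * (∫ x, ρ x ^ 2) - (2/σ) * (∫ x, ρ x * φε x) + ∫ x, φε x ^ 2 := by
    have hid : ∀ x, (ρ x / σ - φε x)^2
        = ((1/σ^2) * (ρ x ^ 2) - (2/σ) * (ρ x * φε x)) + φε x ^ 2 := by
      intro x; field_simp; ring
    have hcomb : Integrable (fun x => (1/σ^2) * (ρ x ^ 2) - (2/σ) * (ρ x * φε x)) :=
      (hρsq.const_mul _).sub (hρφ.const_mul _)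
    rw [integral_congr_ae (Filter.Eventually.of_forall hid),
      integral_add hcomb hphi2,
      integral_sub (hρsq.const_mul _) (hρφ.const_mul _),
      MeasureTheory.integral_const_mul, MeasureTheory.integral_const_mul]
  have hval3 : ∫ x, φε x * (ρ x - σ * φε x)
      = (∫ x, ρ x * φε x) - σ * ∫ x, φε x ^ 2 := by
    have hid : ∀ x, φε x * (ρ x - σ * φε x) = ρ x * φε x - σ * (φε x ^ 2) := fun x => by ring
    rw [integral_congr_ae (Filter.Eventually.of_forall hid),
      integral_sub hρφ (hphi2.const_mul σ), MeasureTheory.integral_const_mul]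
  have hpart1 : (1 / 2 : ℝ) * ∫ p : EuclideanSpace ℝ (Fin d) × EuclideanSpace ℝ (Fin d),
        Gε (p.1 - p.2) * (ρ p.1 - ρ p.2) ^ 2
      = σ * (∫ x, (ρ x / σ - φε x) ^ 2) + ∫ x, φε x * (ρ x - σ * φε x) := by
    rw [hsplit1, hval2, hval3]
    field_simp
    ring
  refine ⟨hpart1, fun hPDE => ?_⟩
  have hΛeq : ∀ x, φε x * (∑ i, iteratedFDeriv ℝ 2 φε x
        ![EuclideanSpace.single i 1, EuclideanSpace.single i 1])
      = -(1/ε^2) * (φε x * (ρ x - σ * φε x)) := by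
    intro x
    have h := hPDE x
    have hΛ : (∑ i, iteratedFDeriv ℝ 2 φε x
        ![EuclideanSpace.single i 1, EuclideanSpace.single i 1]) = (σ * φε x - ρ x)/ε^2 := by
      field_simp
      linarith
    rw [hΛ]
    field_simp
    ring
  have hmix : Integrable (fun x => φε x * ∑ i, iteratedFDeriv ℝ 2 φε x
      ![EuclideanSpace.single i 1, EuclideanSpace.single i 1]) := by
    rw [show (fun x => φε x * ∑ i, iteratedFDeriv ℝ 2 φε x
        ![EuclideanSpace.single i 1, EuclideanSpace.single i 1])
      = fun x => -(1/ε^2) * (φε x * (ρ x - σ * φε x)) from funext hΛeq]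
    exact hint3.const_mul _
  have hibp := aux_ibp_euclidean hd φε hφsm hphi2 hint4 hmix
  have h1 : ∫ x, φε x * (∑ i, iteratedFDeriv ℝ 2 φε x
        ![EuclideanSpace.single i 1, EuclideanSpace.single i 1])
      = -(1/ε^2) * ∫ x, φε x * (ρ x - σ * φε x) := by
    rw [integral_congr_ae (Filter.Eventually.of_forall hΛeq), MeasureTheory.integral_const_mul]
  rw [h1] at hibp
  have hgoal1 : ∫ x, φε x * (ρ x - σ * φε x) = ε^2 * ∫ x, ‖gradient φε x‖^2 := by
    have hε2 : ε^2 ≠ 0 := pow_ne_zero 2 hεne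
    field_simp at hibp
    have e : ∀ x, φε x * (ρ x - φε x * σ) = φε x * (ρ x - σ * φε x) := fun x => by ring
    simp only [e] at hibp
    linarith
  exact ⟨hgoal1, by rw [hpart1, hgoal1]⟩
end
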